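/- Fix ε₀ ∈ (0,1), let c = 2/(1 - ln 2), set ε(m) = 6ε₀/(π m)², and define n(m) = ⌈c·m·(ln(2m) + 2·ln m - ln(6ε₀/π²))⌉. Then for every integer m ≥ 1, (1/2)·n(m) - 6c ≤ ∑_{k=1}^{m} n(k)/(k+1) ≤ n(m) + 1. -/

import Mathlib

open Finset

-- log x ≤ x/2 for x ≥ 1
lemma log_le_half {x : ℝ} (hx : 1 ≤ x) : Real.log x ≤ x / 2 := by
  have h0 : (0:ℝ) < x := by linarith
  have h1 : Real.log (Real.sqrt x) ≤ Real.sqrt x - 1 :=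
    Real.log_le_sub_one_of_pos (Real.sqrt_pos.mpr h0)
  have h2 : Real.log (Real.sqrt x) = Real.log x / 2 := Real.log_sqrt h0.le
  nlinarith [Real.sq_sqrt h0.le, Real.sqrt_nonneg x, sq_nonneg (Real.sqrt x - 2)]

-- log(M+1) - log M ≤ 1/M
lemma log_diff_ub {M : ℝ} (hM : 1 ≤ M) : Real.log (M+1) - Real.log M ≤ 1/M := by
  have h0 : (0:ℝ) < M := by linarith
  have h1 : Real.log ((M+1)/M) ≤ (M+1)/M - 1 := Real.log_le_sub_one_of_pos (by positivity)
  rw [Real.log_div (by linarith) (by linarith)] at h1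
  have : (M+1)/M - 1 = 1/M := by field_simp; ring
  linarith [this ▸ h1]

-- 1/(M+1) ≤ log(M+1) - log M
lemma log_diff_lb {M : ℝ} (hM : 1 ≤ M) : 1/(M+1) ≤ Real.log (M+1) - Real.log M := by
  have h0 : (0:ℝ) < M := by linarith
  have h1 : Real.log (M/(M+1)) ≤ M/(M+1) - 1 := Real.log_le_sub_one_of_pos (by positivity)
  rw [Real.log_div (by linarith) (by linarith)] at h1
  have : M/(M+1) - 1 = -(1/(M+1)) := by field_simp; ring
  linarith [this ▸ h1]

-- ∑ log k ≤ m log m - m + 1 + log m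
lemma sum_log_ub : ∀ m : ℕ, 1 ≤ m →
    ∑ k ∈ Finset.Icc 1 m, Real.log k ≤ (m:ℝ) * Real.log m - m + 1 + Real.log m := by
  intro m hm
  induction m, hm using Nat.le_induction with
  | base => simp
  | succ m hm ih =>
    rw [Finset.sum_Icc_succ_top (by omega)]
    have hM : (1:ℝ) ≤ (m:ℝ) := by exact_mod_cast hm
    have hkey := log_diff_lb hM
    have hmul : 1 ≤ ((m:ℝ)+1) * (Real.log ((m:ℝ)+1) - Real.log m) := by
      have := mul_le_mul_of_nonneg_left hkey (show (0:ℝ) ≤ (m:ℝ)+1 by linarith)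
      have h2 : ((m:ℝ)+1) * (1/((m:ℝ)+1)) = 1 := by field_simp
      linarith [this, h2.ge]
    push_cast
    nlinarith [ih]



lemma log_five_ge : (3:ℝ)/2 ≤ Real.log 5 := by
  rw [Real.le_log_iff_exp_le (by norm_num)]
  have h := Real.exp_one_lt_d9
  have e1 := Real.exp_pos (1:ℝ)
  have h32 : Real.exp (3/2) ^ 2 = Real.exp 3 := by
    rw [← Real.exp_nat_mul]; norm_num
  have h3 : Real.exp 3 = Real.exp 1 ^ 3 := by
    rw [← Real.exp_nat_mul]; norm_num
  have h2 : Real.exp 1 ^ 2 < 2.7182818286 ^ 2 := by nlinarith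
  have hc : Real.exp 1 ^ 3 < 25 := by nlinarith
  have hsq : Real.exp (3/2) ^ 2 < 25 := by rw [h32, h3]; exact hc
  nlinarith [Real.exp_pos ((3:ℝ)/2)]

lemma log_three_ge : (1:ℝ) ≤ Real.log 3 := by
  rw [Real.le_log_iff_exp_le (by norm_num)]
  have h := Real.exp_one_lt_d9
  linarith

lemma log_three_ub : Real.log 3 ≤ Real.log 2 + 1/2 := by
  have h1 : Real.log ((3:ℝ)/2) ≤ (3:ℝ)/2 - 1 := Real.log_le_sub_one_of_pos (by norm_num)
  rw [Real.log_div (by norm_num) (by norm_num)] at h1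
  linarith

lemma log_two_le_one : Real.log 2 ≤ 1 := by
  have := Real.log_le_sub_one_of_pos (show (0:ℝ) < 2 by norm_num); linarith

lemma sum_logfrac_lb : ∀ m : ℕ, 1 ≤ m →
    (m:ℝ) * Real.log m / 2 - 1/2 ≤
      ∑ k ∈ Finset.Icc 1 m, Real.log k * k / ((k:ℝ) + 1) := by
  have base4 : ((4:ℕ):ℝ) * Real.log ((4:ℕ):ℝ) / 2 - 1/2 ≤
      ∑ k ∈ Finset.Icc (1:ℕ) 4, Real.log k * k / ((k:ℝ) + 1) := by
    have hs : Finset.Icc (1:ℕ) 4 = {1,2,3,4} := by decide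
    have h4 : Real.log (4:ℝ) = 2 * Real.log 2 := by
      rw [show (4:ℝ) = 2^2 by norm_num, Real.log_pow]; push_cast; ring
    rw [hs]
    norm_num [Finset.sum_insert, Finset.mem_insert]
    nlinarith [h4, Real.log_two_lt_d9, log_three_ge,
      Real.log_nonneg (by norm_num : (1:ℝ) ≤ 2)]
  intro m hm
  match m, hm with
  | 1, _ => norm_num [Finset.Icc_self]
  | 2, _ =>
    have hs : Finset.Icc (1:ℕ) 2 = {1,2} := by decide
    rw [hs]
    norm_num [Finset.sum_insert, Finset.mem_insert]
    nlinarith [log_two_le_one, Real.log_nonneg (by norm_num : (1:ℝ) ≤ 2)]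
  | 3, _ =>
    have hs : Finset.Icc (1:ℕ) 3 = {1,2,3} := by decide
    rw [hs]
    norm_num [Finset.sum_insert, Finset.mem_insert]
    nlinarith [log_three_ub, log_two_le_one, Real.log_nonneg (by norm_num : (1:ℝ) ≤ 2)]
  | (k+4), _ =>
    induction k with
    | zero => simpa using base4
    | succ k ih =>
      have ih' := ih (by omega)
      have hm' : (4:ℕ) ≤ k + 4 := by omega
      rw [show k+1+4 = (k+4)+1 by omega, Finset.sum_Icc_succ_top (by omega)]
      set M : ℝ := ((k+4 : ℕ) : ℝ) with hMdef
      have hM4 : (4:ℝ) ≤ M := by rw [hMdef]; exact_mod_cast hm'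
      have hM1 : (1:ℝ) ≤ M := by linarith
      have hcast : (((k+4)+1 : ℕ) : ℝ) = M + 1 := by rw [hMdef]; push_cast; ring
      rw [hcast]
      have hlm := log_diff_ub hM1
      have h5 : (3:ℝ)/2 ≤ Real.log (M+1) := by
        refine le_trans log_five_ge (Real.log_le_log (by norm_num) (by linarith))
      have hmul : M * Real.log (M+1) - M * Real.log M ≤ 1 := by
        have := mul_le_mul_of_nonneg_left hlm (show (0:ℝ) ≤ M by linarith)
        have h2 : M * (1/M) = 1 := by field_simp
        nlinarith
      have key : Real.log (M+1) / 2 + 1/2 ≤ Real.log (M+1) * (M+1) / (M+1+1) := by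
        rw [show Real.log (M+1)/2 + 1/2 = (Real.log (M+1) + 1)/2 by ring,
          div_le_div_iff₀ (by norm_num) (by linarith)]
        nlinarith [mul_le_mul_of_nonneg_right h5 (show (0:ℝ) ≤ M by linarith)]
      linarith [ih', key, hmul]
theorem cost_sum_uniform (ε₀ : ℝ) (hε₀ : ε₀ ∈ Set.Ioo (0:ℝ) 1) (c : ℝ)
    (hc : c = 2 / (1 - Real.log 2)) (n : ℕ → ℕ)
    (hn : ∀ m : ℕ, 1 ≤ m →
      n m = ⌈c * m * (Real.log (2 * m) + 2 * Real.log m - Real.log (6 * ε₀ / Real.pi ^ 2))⌉₊)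
    (m : ℕ) (hm : 1 ≤ m) :
    (1 / 2) * (n m : ℝ) - 6 * c ≤ ∑ k ∈ Finset.Icc 1 m, (n k : ℝ) / ((k : ℝ) + 1) ∧
      ∑ k ∈ Finset.Icc 1 m, (n k : ℝ) / ((k : ℝ) + 1) ≤ (n m : ℝ) + 1 := by
  obtain ⟨hε0, hε1⟩ := hε₀
  obtain ⟨L, hLdef⟩ : ∃ L : ℝ, Real.log (6 * ε₀ / Real.pi ^ 2) = L := ⟨_, rfl⟩
  rw [hLdef] at hn
  obtain ⟨a, hadef⟩ : ∃ a : ℝ, a = Real.log 2 - L := ⟨_, rfl⟩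
  have hπ : (3:ℝ) < Real.pi := Real.pi_gt_three
  have harg_pos : 0 < 6 * ε₀ / Real.pi ^ 2 := by positivity
  have harg_lt1 : 6 * ε₀ / Real.pi ^ 2 < 1 := by
    rw [div_lt_one (by positivity)]; nlinarith
  have hLneg : L < 0 := hLdef ▸ Real.log_neg harg_pos harg_lt1
  have hl2pos : 0 < Real.log 2 := Real.log_pos (by norm_num)
  have ha : 0 < a := by rw [hadef]; linarith
  have hl2lt : Real.log 2 < 1 := by
    have := Real.log_two_lt_d9; linarith
  have hc2 : 2 ≤ c := by
    rw [hc, le_div_iff₀ (by linarith)]; nlinarith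
  have hcpos : 0 < c := by linarith
  -- pointwise bounds on n k
  have hnk : ∀ k : ℕ, 1 ≤ k → c * k * (a + 3 * Real.log k) ≤ (n k : ℝ) ∧
      (n k : ℝ) ≤ c * k * (a + 3 * Real.log k) + 1 := by
    intro k hk
    have hk1 : (1:ℝ) ≤ (k:ℝ) := by exact_mod_cast hk
    have hexpr : Real.log (2 * (k:ℝ)) + 2 * Real.log k - L = a + 3 * Real.log k := by
      rw [Real.log_mul (by norm_num) (by linarith : (k:ℝ) ≠ 0), hadef]; ring
    have hnn : 0 ≤ c * k * (a + 3 * Real.log k) := by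
      have hlk := Real.log_nonneg hk1
      have : 0 ≤ a + 3 * Real.log k := by linarith
      positivity
    rw [hn k hk, hexpr]
    exact ⟨Nat.le_ceil _, le_of_lt (Nat.ceil_lt_add_one hnn)⟩
  have hm1 : (1:ℝ) ≤ (m:ℝ) := by exact_mod_cast hm
  have hcard : (Finset.Icc 1 m).card = m := by rw [Nat.card_Icc]; omega
  -- sum abbreviations and bounds
  have hA1 : (m:ℝ)/2 ≤ ∑ k ∈ Finset.Icc 1 m, (k:ℝ)/((k:ℝ)+1) := by
    calc (m:ℝ)/2 = ∑ _k ∈ Finset.Icc 1 m, (1/2:ℝ) := by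
          rw [Finset.sum_const, hcard]; ring
      _ ≤ _ := by
          refine Finset.sum_le_sum fun k hk => ?_
          have hk1 : (1:ℝ) ≤ (k:ℝ) := by exact_mod_cast (Finset.mem_Icc.mp hk).1
          rw [le_div_iff₀ (by linarith)]; linarith
  have hA2 : ∑ k ∈ Finset.Icc 1 m, (k:ℝ)/((k:ℝ)+1) ≤ (m:ℝ) := by
    calc (∑ k ∈ Finset.Icc 1 m, (k:ℝ)/((k:ℝ)+1)) ≤ ∑ _k ∈ Finset.Icc 1 m, (1:ℝ) := by
          refine Finset.sum_le_sum fun k hk => ?_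
          have hk1 : (1:ℝ) ≤ (k:ℝ) := by exact_mod_cast (Finset.mem_Icc.mp hk).1
          rw [div_le_one (by linarith)]; linarith
      _ ≤ (m:ℝ) := by rw [Finset.sum_const, hcard]; simp
  have hH : ∑ k ∈ Finset.Icc 1 m, (1:ℝ)/((k:ℝ)+1) ≤ (m:ℝ)/2 := by
    calc (∑ k ∈ Finset.Icc 1 m, (1:ℝ)/((k:ℝ)+1)) ≤ ∑ _k ∈ Finset.Icc 1 m, (1/2:ℝ) := by
          refine Finset.sum_le_sum fun k hk => ?_
          have hk1 : (1:ℝ) ≤ (k:ℝ) := by exact_mod_cast (Finset.mem_Icc.mp hk).1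
          rw [div_le_div_iff₀ (by linarith) (by norm_num)]; linarith
      _ ≤ (m:ℝ)/2 := by rw [Finset.sum_const, hcard]; ring_nf; rfl
  have hB1 := sum_logfrac_lb m hm
  have hB2 : ∑ k ∈ Finset.Icc 1 m, Real.log k * k / ((k:ℝ)+1) ≤
      (m:ℝ) * Real.log m - m + 1 + Real.log m := by
    refine le_trans (Finset.sum_le_sum fun k hk => ?_) (sum_log_ub m hm)
    have hk1 : (1:ℝ) ≤ (k:ℝ) := by exact_mod_cast (Finset.mem_Icc.mp hk).1
    rw [show Real.log k * (k:ℝ) / ((k:ℝ)+1) = Real.log k * ((k:ℝ)/((k:ℝ)+1)) by ring]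
    exact mul_le_of_le_one_right (Real.log_nonneg hk1)
      ((div_le_one (by linarith)).mpr (by linarith))
  -- split sum identity (lower version)
  have hsplit : ∑ k ∈ Finset.Icc 1 m, (c * k * (a + 3 * Real.log k))/((k:ℝ)+1)
      = c*a*(∑ k ∈ Finset.Icc 1 m, (k:ℝ)/((k:ℝ)+1))
        + 3*c*(∑ k ∈ Finset.Icc 1 m, Real.log k * k / ((k:ℝ)+1)) := by
    rw [Finset.mul_sum, Finset.mul_sum, ← Finset.sum_add_distrib]
    exact Finset.sum_congr rfl fun k _ => by ring
  have hsplit' : ∑ k ∈ Finset.Icc 1 m, (c * k * (a + 3 * Real.log k) + 1)/((k:ℝ)+1)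
      = c*a*(∑ k ∈ Finset.Icc 1 m, (k:ℝ)/((k:ℝ)+1))
        + 3*c*(∑ k ∈ Finset.Icc 1 m, Real.log k * k / ((k:ℝ)+1))
        + ∑ k ∈ Finset.Icc 1 m, (1:ℝ)/((k:ℝ)+1) := by
    rw [Finset.mul_sum, Finset.mul_sum, ← Finset.sum_add_distrib, ← Finset.sum_add_distrib]
    exact Finset.sum_congr rfl fun k _ => by ring
  have hSlow : ∑ k ∈ Finset.Icc 1 m, (c * k * (a + 3 * Real.log k))/((k:ℝ)+1)
      ≤ ∑ k ∈ Finset.Icc 1 m, (n k : ℝ) / ((k : ℝ) + 1) := by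
    refine Finset.sum_le_sum fun k hk => ?_
    have hk1 := (Finset.mem_Icc.mp hk).1
    have hk1' : (1:ℝ) ≤ (k:ℝ) := by exact_mod_cast hk1
    exact div_le_div_of_nonneg_right ((hnk k hk1).1) (by linarith) |>.trans_eq rfl
  have hSup : ∑ k ∈ Finset.Icc 1 m, (n k : ℝ) / ((k : ℝ) + 1)
      ≤ ∑ k ∈ Finset.Icc 1 m, (c * k * (a + 3 * Real.log k) + 1)/((k:ℝ)+1) := by
    refine Finset.sum_le_sum fun k hk => ?_
    have hk1 := (Finset.mem_Icc.mp hk).1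
    have hk1' : (1:ℝ) ≤ (k:ℝ) := by exact_mod_cast hk1
    exact div_le_div_of_nonneg_right ((hnk k hk1).2) (by linarith) |>.trans_eq rfl
  have hnm1 := (hnk m hm).1
  have hnm2 := (hnk m hm).2
  constructor
  · -- lower bound
    have h1 : c*a*((m:ℝ)/2) ≤ c*a*(∑ k ∈ Finset.Icc 1 m, (k:ℝ)/((k:ℝ)+1)) :=
      mul_le_mul_of_nonneg_left hA1 (by positivity)
    have h2 : (3*c)*((m:ℝ) * Real.log m / 2 - 1/2)
        ≤ (3*c)*(∑ k ∈ Finset.Icc 1 m, Real.log k * k / ((k:ℝ)+1)) :=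
      mul_le_mul_of_nonneg_left hB1 (by positivity)
    linarith [hSlow, hsplit.ge, hsplit.le, h1, h2, hnm2, hc2]
  · -- upper bound
    have hlogm : Real.log m ≤ (m:ℝ)/2 := log_le_half hm1
    have hu0 : 0 ≤ (m:ℝ) - 1 - Real.log m := by
      rcases eq_or_lt_of_le hm with h | h
      · rw [← h]; norm_num
      · have h2 : (2:ℝ) ≤ (m:ℝ) := by exact_mod_cast h
        linarith
    have hprod : 0 ≤ (c - 2) * ((m:ℝ) - 1 - Real.log m) :=
      mul_nonneg (by linarith) hu0
    have h1 : c*a*(∑ k ∈ Finset.Icc 1 m, (k:ℝ)/((k:ℝ)+1)) ≤ c*a*(m:ℝ) :=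
      mul_le_mul_of_nonneg_left hA2 (by positivity)
    have h2 : (3*c)*(∑ k ∈ Finset.Icc 1 m, Real.log k * k / ((k:ℝ)+1))
        ≤ (3*c)*((m:ℝ) * Real.log m - m + 1 + Real.log m) :=
      mul_le_mul_of_nonneg_left hB2 (by positivity)
    linarith [hSup, hsplit'.le, hsplit'.ge, h1, h2, hnm1, hH, hlogm, hu0, hprod, hc2]
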